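/- For a ∈ ℤ and μ ∈ ℂ, the bilinear map Θ^a_μ on W(a,−1) defined by Θ^a_μ(L_m, L_n) = (m−n)·μ·I_{m+n−a} and Θ^a_μ(L_m, I_n) = Θ^a_μ(I_n, L_m) = Θ^a_μ(I_m, I_n) = 0 is a skew-symmetric biderivation of W(a,−1). -/

import Mathlib

/-- `f` is a biderivation: a derivation in each argument. -/
def IsBiderivation {W : Type*} [LieRing W] (f : W → W → W) : Prop :=
  (∀ x y z : W, f ⁅x, y⁆ z = ⁅x, f y z⁆ + ⁅f x z, y⁆) ∧
  (∀ x y z : W, f x ⁅y, z⁆ = ⁅f x y, z⁆ + ⁅y, f x z⁆)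

/-- A model of the Lie algebra `W(a,b)`: a complex Lie algebra with a basis
`{L m, I m | m : ℤ}` satisfying the defining bracket relations. -/
structure IsWab (a b : ℂ) (W : Type*) [LieRing W] [LieAlgebra ℂ W]
    (L I : ℤ → W) : Prop where
  bracket_LL : ∀ m n : ℤ, ⁅L m, L n⁆ = ((m - n : ℤ) : ℂ) • L (m + n)
  bracket_LI : ∀ m n : ℤ, ⁅L m, I n⁆ = (-((n : ℂ) + a + b * (m : ℂ))) • I (m + n)
  bracket_II : ∀ m n : ℤ, ⁅I m, I n⁆ = 0
  basis : ∃ B : Module.Basis (ℤ ⊕ ℤ) ℂ W,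
    (∀ m : ℤ, B (Sum.inl m) = L m) ∧ (∀ m : ℤ, B (Sum.inr m) = I m)

/-- The map `Θ^a_μ` (given on the basis by `Θ^a_μ(L m, L n) = (m-n) μ I (m+n-a)`
and zero on other basis pairs) is a skew-symmetric biderivation of `W(a,-1)`
for `a ∈ ℤ`. -/
theorem theta_skew_biderivation (a : ℤ) (μ : ℂ) {W : Type*}
    [LieRing W] [LieAlgebra ℂ W] (L I : ℤ → W) (hW : IsWab (a : ℂ) (-1) W L I)
    (f : W →ₗ[ℂ] W →ₗ[ℂ] W)
    (hLL : ∀ m n : ℤ, f (L m) (L n) = (((m - n : ℤ) : ℂ) * μ) • I (m + n - a))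
    (hLI : ∀ m n : ℤ, f (L m) (I n) = 0)
    (hIL : ∀ m n : ℤ, f (I n) (L m) = 0)
    (hII : ∀ m n : ℤ, f (I m) (I n) = 0) :
    (∀ x y : W, f x y = - f y x) ∧ IsBiderivation (fun x y => f x y) := by
  obtain ⟨B, hBL, hBI⟩ := hW.basis
  have hILb : ∀ m n : ℤ, ⁅I n, L m⁆ =
      -((-((n : ℂ) + (a : ℂ) + (-1) * (m : ℂ))) • I (m + n)) := by
    intro m n
    rw [← lie_skew, hW.bracket_LI]
  -- skew symmetry
  have skew : ∀ x y : W, f x y = - f y x := by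
    have h : f + f.flip = 0 := by
      apply B.ext; intro i; apply B.ext; intro j
      rcases i with m | m <;> rcases j with n | n <;>
        simp only [LinearMap.add_apply, LinearMap.flip_apply, LinearMap.zero_apply,
          hBL, hBI, hLL, hLI, hIL, hII, add_zero, zero_add]
      rw [show n + m - a = m + n - a from by ring, ← add_smul]
      rw [show (((m - n : ℤ) : ℂ) * μ + ((n - m : ℤ) : ℂ) * μ) = 0 from by push_cast; ring,
        zero_smul]
    intro x y
    have h2' := DFunLike.congr_fun (DFunLike.congr_fun h x) y
    simp only [LinearMap.add_apply, LinearMap.flip_apply, LinearMap.zero_apply] at h2'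
    have h2 : f x y + f y x = 0 := h2'
    exact eq_neg_of_add_eq_zero_left h2
  have key : ∀ i j k : ℤ ⊕ ℤ,
      f ⁅B i, B j⁆ (B k) = ⁅B i, f (B j) (B k)⁆ + ⁅f (B i) (B k), B j⁆ := by
    intro i j k
    rcases i with m | m <;> rcases j with n | n <;> rcases k with p | p <;>
      simp only [hBL, hBI, hW.bracket_LL, hW.bracket_LI, hW.bracket_II, hILb,
        map_smul, LinearMap.smul_apply, LinearMap.map_smul, hLL, hLI, hIL, hII,
        lie_smul, smul_lie, smul_zero, zero_lie, lie_zero, add_zero, zero_add,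
        smul_neg, neg_smul, neg_neg, smul_smul, map_zero, LinearMap.zero_apply,
        neg_zero, map_neg, LinearMap.neg_apply, neg_eq_zero]
    rw [show m + (n + p - a) = m + n + p - a from by ring,
        show n + (m + p - a) = m + n + p - a from by ring, ← neg_smul, ← add_smul]
    congr 1
    push_cast
    ring
  have main : ∀ x y z : W, f ⁅x, y⁆ z = ⁅x, f y z⁆ + ⁅f x z, y⁆ := by
    letI : LieRing (Module.End ℂ W) := LieRing.ofAssociativeRing
    let b : W →ₗ[ℂ] W →ₗ[ℂ] W :=
      ((LieAlgebra.ad ℂ W : W →ₗ⁅ℂ⁆ Module.End ℂ W) : W →ₗ[ℂ] Module.End ℂ W)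
    let G : W →ₗ[ℂ] W →ₗ[ℂ] W →ₗ[ℂ] W := b.compr₂ f
    let H : W →ₗ[ℂ] W →ₗ[ℂ] W →ₗ[ℂ] W :=
      (((LinearMap.llcomp ℂ W W W).comp b).compl₂ f)
    let K : W →ₗ[ℂ] W →ₗ[ℂ] W →ₗ[ℂ] W :=
      ((((LinearMap.llcomp ℂ W W W).comp b.flip).compl₂ f)).flip
    have hG : ∀ x y z : W, G x y z = f ⁅x, y⁆ z := fun x y z => rfl
    have hH : ∀ x y z : W, H x y z = ⁅x, f y z⁆ := fun x y z => rfl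
    have hK : ∀ x y z : W, K x y z = ⁅f x z, y⁆ := fun x y z => rfl
    have hGHK : G = H + K := by
      apply B.ext; intro i; apply B.ext; intro j; apply B.ext; intro k
      simp only [LinearMap.add_apply, hG, hH, hK]
      exact key i j k
    intro x y z
    have h4 := DFunLike.congr_fun (DFunLike.congr_fun (DFunLike.congr_fun hGHK x) y) z
    simpa only [LinearMap.add_apply, hG, hH, hK] using h4
  refine ⟨skew, main, ?_⟩
  intro x y z
  have h1 : f ⁅y, z⁆ x = ⁅y, f z x⁆ + ⁅f y x, z⁆ := main y z x
  have h2 : f x ⁅y, z⁆ = - f ⁅y, z⁆ x := skew x ⁅y, z⁆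
  show f x ⁅y, z⁆ = ⁅f x y, z⁆ + ⁅y, f x z⁆
  rw [h2, h1]
  rw [skew z x, skew y x]
  simp only [lie_neg, neg_lie, neg_add_rev, neg_neg]
  try abel
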